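/- Let P be the uniform probability measure on the horizontal diameter {(x,0) : −1 ≤ x ≤ 1} of the unit circle in ℝ², and let the constraint be the unit circle. Then the set {(−1,0), (1,0)} is an optimal set of two points, and the second constrained quantization error is V_2 = 1/3. -/

import Mathlib

open MeasureTheory Real Set

noncomputable section

abbrev E2 : Type := EuclideanSpace ℝ (Fin 2)

/-- The point `(x, y)` of the Euclidean plane. -/
def cpt (x y : ℝ) : E2 := WithLp.toLp 2 ![x, y]

/-- Distortion error of `P` with respect to the set `α`: `∫ min_{a ∈ α} ‖x - a‖² dP(x)`. -/
def cDistortion (P : Measure E2) (α : Set E2) : ℝ :=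
  ∫ x, (⨅ a : α, dist x (a : E2) ^ 2) ∂P

/-- The `n`th constrained quantization error of `P` with constraint set `S`. -/
def cqError (P : Measure E2) (S : Set E2) (n : ℕ) : ℝ :=
  sInf {v : ℝ | ∃ α : Set E2, α ⊆ S ∧ α.Finite ∧ 1 ≤ α.ncard ∧ α.ncard ≤ n ∧
    v = cDistortion P α}

/-- `α` is an optimal set of `n` points for `P` with constraint `S`: it is an admissible set
attaining the `n`th constrained quantization error. -/
def IsOptimalNSet (P : Measure E2) (S : Set E2) (n : ℕ) (α : Set E2) : Prop :=
  α ⊆ S ∧ α.Finite ∧ 1 ≤ α.ncard ∧ α.ncard ≤ n ∧ cDistortion P α = cqError P S n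

/-- The uniform probability distribution on the interval `[a, b]`. -/
def uniformIccM (a b : ℝ) : Measure ℝ :=
  (ENNReal.ofReal (b - a))⁻¹ • volume.restrict (Icc a b)

/-- The point of the line `y = m x + c` with abscissa `t`. -/
def segPt (m c t : ℝ) : E2 := cpt t (m * t + c)

/- ### Auxiliary lemmas -/

lemma cont_cpt : Continuous fun x : ℝ => cpt x 0 := by
  unfold cpt
  exact (PiLp.continuous_toLp 2 _).comp (continuous_pi fun i => by fin_cases i <;> simp <;> fun_prop)

lemma dist_cpt_sq (x : ℝ) (a : E2) : dist (cpt x 0) a ^ 2 = (x - a 0) ^ 2 + (a 1) ^ 2 := by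
  rw [EuclideanSpace.dist_eq, Real.sq_sqrt (by positivity)]
  simp [cpt, Fin.sum_univ_two, Real.dist_eq, sq_abs]

lemma sphere_coord {a : E2} (h : a ∈ Metric.sphere (0 : E2) 1) : (a 0) ^ 2 + (a 1) ^ 2 = 1 := by
  rw [mem_sphere_iff_norm, sub_zero, EuclideanSpace.norm_eq] at h
  have := congrArg (· ^ 2) h
  simpa [Fin.sum_univ_two, Real.sq_sqrt, sq_sqrt, add_nonneg, sq_nonneg] using this

lemma iInf_pair_dist (p q y : E2) :
    (⨅ a : ({p, q} : Set E2), dist y (a : E2) ^ 2) = min (dist y p ^ 2) (dist y q ^ 2) := by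
  rw [iInf, ← Set.image_eq_range (fun a => dist y a ^ 2) {p, q}, Set.image_pair, csInf_pair]

lemma iInf_finset_dist (α : Set E2) (hfin : α.Finite) (hne : α.Nonempty) (y : E2) :
    (⨅ a : α, dist y (a : E2) ^ 2)
      = hfin.toFinset.inf' (by simpa using hne) (fun a => dist y a ^ 2) := by
  rw [Finset.inf'_eq_csInf_image, iInf]
  congr 1
  rw [hfin.coe_toFinset, Set.image_eq_range]

lemma cont_iInf (α : Set E2) (hfin : α.Finite) (hne : α.Nonempty) :
    Continuous fun y : E2 => ⨅ a : α, dist y (a : E2) ^ 2 := by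
  have : (fun y : E2 => ⨅ a : α, dist y (a : E2) ^ 2)
      = fun y => hfin.toFinset.inf' (by simpa using hne) (fun a => dist y a ^ 2) := by
    funext y; exact iInf_finset_dist α hfin hne y
  rw [this]
  exact Continuous.finset_inf'_apply _ fun i _ => by fun_prop

lemma pointwise_lb {α : Set E2} (hS : α ⊆ Metric.sphere (0 : E2) 1) (hne : α.Nonempty) (x : ℝ) :
    (1 - |x|) ^ 2 ≤ ⨅ a : α, dist (cpt x 0) (a : E2) ^ 2 := by
  haveI : Nonempty α := hne.to_subtype
  refine le_ciInf fun a => ?_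
  have hc := sphere_coord (hS a.2)
  rw [dist_cpt_sq]
  have h0 : ((a : E2) 0) ^ 2 ≤ 1 := by nlinarith [sq_nonneg ((a : E2) 1)]
  have h1 : |(a : E2) 0| ≤ 1 := abs_le.mpr ⟨by nlinarith, by nlinarith⟩
  have h2 : (a : E2) 0 * x ≤ |x| := by
    calc (a : E2) 0 * x ≤ |(a : E2) 0 * x| := le_abs_self _
    _ = |(a : E2) 0| * |x| := abs_mul _ _
    _ ≤ 1 * |x| := by gcongr
    _ = |x| := one_mul _
  have h3 : x ^ 2 = |x| ^ 2 := (sq_abs x).symm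
  nlinarith [sq_nonneg ((a : E2) 1)]

lemma integrable_unif {f : ℝ → ℝ} (hf : Continuous f) : Integrable f (uniformIccM (-1) 1) := by
  rw [uniformIccM]
  refine Integrable.smul_measure ?_ (ENNReal.inv_ne_top.mpr (by simp))
  exact hf.integrableOn_Icc

lemma int_split : ∫ x in (-1:ℝ)..1, (1 - |x|) ^ 2 = 2 / 3 := by
  have h1 : IntervalIntegrable (fun x : ℝ => (1 - |x|) ^ 2) volume (-1) 0 := by
    apply Continuous.intervalIntegrable; fun_prop
  have h2 : IntervalIntegrable (fun x : ℝ => (1 - |x|) ^ 2) volume 0 1 := by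
    apply Continuous.intervalIntegrable; fun_prop
  rw [← intervalIntegral.integral_add_adjacent_intervals h1 h2]
  have e1 : ∫ x in (-1:ℝ)..0, (1 - |x|) ^ 2 = ∫ x in (-1:ℝ)..0, (x + 1) ^ 2 := by
    apply intervalIntegral.integral_congr
    intro x hx
    rw [uIcc_of_le (by norm_num)] at hx
    have : |x| = -x := abs_of_nonpos hx.2
    simp only [this]; ring
  have e2 : ∫ x in (0:ℝ)..1, (1 - |x|) ^ 2 = ∫ x in (0:ℝ)..1, (x + (-1)) ^ 2 := by
    apply intervalIntegral.integral_congr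
    intro x hx
    rw [uIcc_of_le (by norm_num)] at hx
    have : |x| = x := abs_of_nonneg hx.1
    simp only [this]; ring
  rw [e1, e2]
  rw [intervalIntegral.integral_comp_add_right (fun y => y ^ 2) 1,
      intervalIntegral.integral_comp_add_right (fun y => y ^ 2) (-1)]
  rw [integral_pow, integral_pow]
  norm_num

lemma key_int : ∫ x, (1 - |x|) ^ 2 ∂(uniformIccM (-1) 1) = 1 / 3 := by
  rw [uniformIccM, integral_smul_measure]
  rw [MeasureTheory.integral_Icc_eq_integral_Ioc,
      ← intervalIntegral.integral_of_le (by norm_num : (-1:ℝ) ≤ 1), int_split]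
  norm_num [ENNReal.toReal_inv]

lemma distortion_map {α : Set E2} (hfin : α.Finite) (hne : α.Nonempty) :
    cDistortion (Measure.map (fun x : ℝ => cpt x 0) (uniformIccM (-1) 1)) α
      = ∫ x, (⨅ a : α, dist (cpt x 0) (a : E2) ^ 2) ∂(uniformIccM (-1) 1) := by
  rw [cDistortion]
  exact integral_map cont_cpt.aemeasurable
    ((cont_iInf α hfin hne).aestronglyMeasurable)

lemma distortion_lb {α : Set E2} (hS : α ⊆ Metric.sphere (0 : E2) 1) (hfin : α.Finite)
    (hne : α.Nonempty) :
    1 / 3 ≤ cDistortion (Measure.map (fun x : ℝ => cpt x 0) (uniformIccM (-1) 1)) α := by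
  rw [distortion_map hfin hne, ← key_int]
  apply integral_mono (integrable_unif (by fun_prop))
    (integrable_unif ((cont_iInf α hfin hne).comp cont_cpt))
  exact pointwise_lb hS hne

lemma cpt_ne : cpt (-1) 0 ≠ cpt 1 0 := by
  intro h
  have := congrArg (fun v : E2 => v 0) h
  simp [cpt] at this
  norm_num at this

lemma cpt_mem_sphere (s : ℝ) (hs : s = 1 ∨ s = -1) : cpt s 0 ∈ Metric.sphere (0 : E2) 1 := by
  rw [mem_sphere_iff_norm, sub_zero, EuclideanSpace.norm_eq]
  rcases hs with h | h <;> subst h <;> simp [cpt, Fin.sum_univ_two]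

lemma distortion_opt :
    cDistortion (Measure.map (fun x : ℝ => cpt x 0) (uniformIccM (-1) 1))
      {cpt (-1) 0, cpt 1 0} = 1 / 3 := by
  rw [distortion_map (Set.toFinite _) ⟨_, Set.mem_insert _ _⟩, ← key_int]
  apply integral_congr_ae
  filter_upwards with x
  rw [iInf_pair_dist, dist_cpt_sq, dist_cpt_sq]
  simp only [cpt, PiLp.toLp_apply, Matrix.cons_val_zero, Matrix.cons_val_one, Matrix.head_cons]
  rcases le_or_gt 0 x with h | h
  · rw [abs_of_nonneg h, min_eq_right (by nlinarith)]
    ring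
  · rw [abs_of_neg h, min_eq_left (by nlinarith)]
    ring

/-- For the uniform distribution on the horizontal diameter `{(x,0) : -1 ≤ x ≤ 1}` of the unit
circle, with constraint the unit circle: `{(-1,0), (1,0)}` is an optimal set of two points, and
the second constrained quantization error is `V₂ = 1/3`. -/
theorem diameter_circle_constraint_two_points :
    IsOptimalNSet (Measure.map (fun x : ℝ => cpt x 0) (uniformIccM (-1) 1))
      (Metric.sphere (0 : E2) 1) 2 {cpt (-1) 0, cpt 1 0} ∧
    cqError (Measure.map (fun x : ℝ => cpt x 0) (uniformIccM (-1) 1))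
      (Metric.sphere (0 : E2) 1) 2 = 1 / 3 := by
  set P := Measure.map (fun x : ℝ => cpt x 0) (uniformIccM (-1) 1)
  have hsub : ({cpt (-1) 0, cpt 1 0} : Set E2) ⊆ Metric.sphere (0 : E2) 1 := by
    rintro a (rfl | rfl)
    · exact cpt_mem_sphere _ (Or.inr rfl)
    · exact cpt_mem_sphere _ (Or.inl rfl)
  have hcard : ({cpt (-1) 0, cpt 1 0} : Set E2).ncard = 2 := Set.ncard_pair cpt_ne
  have hmem : (1 : ℝ) / 3 ∈ {v : ℝ | ∃ α : Set E2, α ⊆ Metric.sphere (0 : E2) 1 ∧ α.Finite ∧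
      1 ≤ α.ncard ∧ α.ncard ≤ 2 ∧ v = cDistortion P α} := by
    exact ⟨{cpt (-1) 0, cpt 1 0}, hsub, Set.toFinite _, by omega, by omega, distortion_opt.symm⟩
  have hlb : ∀ v ∈ {v : ℝ | ∃ α : Set E2, α ⊆ Metric.sphere (0 : E2) 1 ∧ α.Finite ∧
      1 ≤ α.ncard ∧ α.ncard ≤ 2 ∧ v = cDistortion P α}, 1 / 3 ≤ v := by
    rintro v ⟨α, hS, hfin, h1, _, rfl⟩
    have hne : α.Nonempty := by
      rw [← Set.ncard_pos hfin]; omega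
    exact distortion_lb hS hfin hne
  have hq : cqError P (Metric.sphere (0 : E2) 1) 2 = 1 / 3 := by
    rw [cqError]
    exact le_antisymm (csInf_le ⟨1 / 3, hlb⟩ hmem) (le_csInf ⟨_, hmem⟩ hlb)
  exact ⟨⟨hsub, Set.toFinite _, by omega, by omega, by rw [distortion_opt, hq]⟩, hq⟩
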